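/- Consider a PIN model with fixed parameters (𝒜, ρ, P, φ) on a sequence of interaction graphs G_n (G_n having n nodes and at least one link) with total mixing gaps W_{G_n} → 0 as n → ∞ (asymptotically totally mixing), and for each n ≥ 2 let μ_n be a stationary distribution of the PIN model on G_n. Suppose V : ℝ^𝒜 → ℝ is twice continuously differentiable and ∇V(θ)·D̄(θ) ≤ 0 for all θ ∈ P(𝒜) (a mean-field Lyapunov function). Then for every δ > 0, lim_{n→∞} μ_n({x ∈ 𝒜^{V_n} : ∇V(θ(x))·D̄(θ(x)) > −δ}) = 1. -/

import Mathlib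

open Finset Filter

noncomputable section

/-- The empirical type (state frequencies) of a configuration. -/
def confType {V A : Type*} [Fintype V] [DecidableEq A] (x : V → A) (i : A) : ℝ :=
  ((Finset.univ.filter fun v => x v = i).card : ℝ) / (Fintype.card V : ℝ)

/-- The boundary (empirical link-pair frequencies) of a configuration. -/
def boundary {V A : Type*} [DecidableEq A] (E : Finset (V × V)) (x : V → A) (i j : A) : ℝ :=
  ((E.filter fun e => x e.1 = i ∧ x e.2 = j).card : ℝ) / (E.card : ℝ)

/-- Off-diagonal part of the PIN transition matrix. -/
def Toff {V A : Type*} [Fintype V] [DecidableEq V] [DecidableEq A]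
    (E : Finset (V × V)) (ρ : ℝ) (P : A → A → ℝ) (φ : A → A → A → ℝ) (x y : V → A) : ℝ :=
  if (Finset.univ.filter fun v => x v ≠ y v).card = 1 then
    ∑ u ∈ Finset.univ.filter fun v => x v ≠ y v,
      ((1 - ρ) * (1 / (Fintype.card V : ℝ)) * P (x u) (y u)
        + (ρ / (E.card : ℝ)) * ∑ e ∈ E.filter fun e => e.1 = u, φ (x u) (y u) (x e.2))
  else 0

/-- The PIN transition matrix. -/
def pinTrans {V A : Type*} [Fintype V] [DecidableEq V] [Fintype A] [DecidableEq A]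
    (E : Finset (V × V)) (ρ : ℝ) (P : A → A → ℝ) (φ : A → A → A → ℝ) (x y : V → A) : ℝ :=
  if x = y then 1 - ∑ z : V → A, Toff E ρ P φ x z else Toff E ρ P φ x y

/-- The mean drift of the PIN model. -/
def meanDrift {V A : Type*} [Fintype V] [DecidableEq V] [Fintype A] [DecidableEq A]
    (E : Finset (V × V)) (ρ : ℝ) (P : A → A → ℝ) (φ : A → A → A → ℝ) (x : V → A) (i : A) : ℝ :=
  (Fintype.card V : ℝ) * ∑ y : V → A, pinTrans E ρ P φ x y * (confType y i - confType x i)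

/-- The limit drift of the PIN model. -/
def limitDrift {A : Type*} [Fintype A] (ρ : ℝ) (P : A → A → ℝ) (φ : A → A → A → ℝ)
    (θ : A → ℝ) (i : A) : ℝ :=
  ((1 - ρ) * ∑ j, P j i * θ j) + (ρ * ∑ ℓ, θ ℓ * ∑ j, φ j i ℓ * θ j) - θ i

/-- The linear operator Q acting on boundaries. -/
def Qop {A : Type*} [Fintype A] (φ : A → A → A → ℝ) (ξ : A → A → ℝ) (i : A) : ℝ :=
  (∑ ℓ, ∑ j, ξ j ℓ * φ j i ℓ) - ∑ ℓ, ξ i ℓ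

/-- Membership in the probability simplex over `A`. -/
def inSimplex {A : Type*} [Fintype A] (θ : A → ℝ) : Prop :=
  (∀ i, 0 ≤ θ i) ∧ ∑ i, θ i = 1

/-- The hypotheses on the parameters of a PIN model: `ρ ∈ [0,1]`, `P` and each `φ(ℓ)`
row-stochastic and nonnegative, the interaction graph nonempty and without self-loops. -/
def IsPinModel {V A : Type*} [Fintype A] (E : Finset (V × V)) (ρ : ℝ)
    (P : A → A → ℝ) (φ : A → A → A → ℝ) : Prop :=
  0 ≤ ρ ∧ ρ ≤ 1 ∧ (∀ i j, 0 ≤ P i j) ∧ (∀ i, ∑ j, P i j = 1) ∧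
    (∀ i j ℓ, 0 ≤ φ i j ℓ) ∧ (∀ i ℓ, ∑ j, φ i j ℓ = 1) ∧
    E.Nonempty ∧ ∀ e ∈ E, e.1 ≠ e.2

/-- Stationary distribution of a PIN model. -/
def IsPinStationary {V A : Type*} [Fintype V] [DecidableEq V] [Fintype A] [DecidableEq A]
    (E : Finset (V × V)) (ρ : ℝ) (P : A → A → ℝ) (φ : A → A → A → ℝ)
    (μ : (V → A) → ℝ) : Prop :=
  (∀ x, 0 ≤ μ x) ∧ (∑ x : V → A, μ x = 1) ∧
    ∀ y : V → A, ∑ x : V → A, μ x * pinTrans E ρ P φ x y = μ y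

/-- The total mixing gap of a graph. -/
def mixingGap {V : Type*} [Fintype V] [DecidableEq V] (E : Finset (V × V)) : ℝ :=
  sSup {w : ℝ | ∃ S U : Finset V, Disjoint S U ∧
    w = |((E.filter fun e => e.1 ∈ S ∧ e.2 ∈ U).card : ℝ) / (E.card : ℝ) -
      ((S.card : ℝ) * (U.card : ℝ)) / ((Fintype.card V : ℝ) * ((Fintype.card V : ℝ) - 1))|}

open Classical in
/-- Total `μ`-mass of the set of configurations satisfying `p`. -/
def massOf {X : Type*} [Fintype X] (μ : X → ℝ) (p : X → Prop) : ℝ :=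
  ∑ x, if p x then μ x else 0

set_option linter.unusedSectionVars false
set_option linter.unusedTactic false

section Comb
variable {V A : Type*} [Fintype V] [DecidableEq V] [Fintype A] [DecidableEq A]
  (E : Finset (V × V)) (ρ : ℝ) (P : A → A → ℝ) (φ : A → A → A → ℝ)

/-- single-move weight -/
def wgt (x : V → A) (u : V) (a : A) : ℝ :=
  (1 - ρ) * (1 / (Fintype.card V : ℝ)) * P (x u) a
    + (ρ / (E.card : ℝ)) * ∑ e ∈ E.filter fun e => e.1 = u, φ (x u) a (x e.2)

lemma Toff_self (x : V → A) : Toff E ρ P φ x x = 0 := by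
  simp [Toff]

lemma Toff_update (x : V → A) (u : V) (a : A) (h : a ≠ x u) :
    Toff E ρ P φ x (Function.update x u a) = wgt E ρ P φ x u a := by
  have hf : (Finset.univ.filter fun v => x v ≠ Function.update x u a v) = {u} := by
    ext v
    rcases eq_or_ne v u with rfl | hv
    · simp [Function.update_self, Ne.symm h]
    · simp [Function.update_of_ne hv, hv]
  rw [Toff, hf]
  simp [wgt]

lemma sum_Toff_mul (x : V → A) (c : (V → A) → ℝ) (hc : c x = 0) :
    ∑ y : V → A, Toff E ρ P φ x y * c y
      = ∑ p ∈ (Finset.univ ×ˢ Finset.univ).filter (fun p : V × A => p.2 ≠ x p.1),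
          wgt E ρ P φ x p.1 p.2 * c (Function.update x p.1 p.2) := by
  classical
  set s := (Finset.univ ×ˢ Finset.univ).filter (fun p : V × A => p.2 ≠ x p.1) with hs
  have hinj : Set.InjOn (fun p : V × A => Function.update x p.1 p.2) s := by
    intro p hp q hq hpq
    simp only [hs, Finset.mem_coe, mem_filter, mem_product, mem_univ, true_and] at hp hq
    have hpq' : Function.update x p.1 p.2 = Function.update x q.1 q.2 := hpq
    have h1 : Function.update x p.1 p.2 p.1 = Function.update x q.1 q.2 p.1 := by rw [hpq']
    rcases eq_or_ne p.1 q.1 with h | h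
    · have h2 : p.2 = q.2 := by
        rw [Function.update_self] at h1
        rw [h1, h, Function.update_self]
      exact Prod.ext h h2
    · exfalso
      rw [Function.update_self, Function.update_of_ne h] at h1
      exact hp h1
  have step1 : ∑ p ∈ s, wgt E ρ P φ x p.1 p.2 * c (Function.update x p.1 p.2)
      = ∑ y ∈ s.image (fun p : V × A => Function.update x p.1 p.2), Toff E ρ P φ x y * c y := by
    rw [Finset.sum_image (fun p hp q hq h => hinj (Finset.mem_coe.mpr hp) (Finset.mem_coe.mpr hq) h)]
    apply Finset.sum_congr rfl
    intro p hp
    simp only [hs, mem_filter, mem_product, mem_univ, true_and] at hp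
    rw [Toff_update E ρ P φ x p.1 p.2 hp]
  rw [step1]
  symm
  apply Finset.sum_subset (Finset.subset_univ _)
  intro y _ hy
  rcases eq_or_ne y x with rfl | hxy
  · rw [hc, mul_zero]
  by_cases hcard : (Finset.univ.filter fun v => x v ≠ y v).card = 1
  · exfalso
    obtain ⟨u, hu⟩ := Finset.card_eq_one.mp hcard
    have hyu : y u ≠ x u := by
      have : u ∈ Finset.univ.filter fun v => x v ≠ y v := hu ▸ Finset.mem_singleton_self u
      simp only [mem_filter] at this
      exact Ne.symm this.2
    have hyeq : y = Function.update x u (y u) := by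
      funext v
      rcases eq_or_ne v u with rfl | hv
      · rw [Function.update_self]
      · rw [Function.update_of_ne hv]
        by_contra hne
        have : v ∈ Finset.univ.filter fun w => x w ≠ y w := by
          simp [Ne.symm hne]
        rw [hu, Finset.mem_singleton] at this
        exact hv this
    exact hy (Finset.mem_image.mpr ⟨(u, y u), by simp [hs, hyu], hyeq.symm⟩)
  · rw [Toff, if_neg hcard, zero_mul]

lemma confType_update (x : V → A) (u : V) (a : A) (i : A) :
    confType (Function.update x u a) i - confType x i
      = ((if a = i then (1:ℝ) else 0) - (if x u = i then 1 else 0)) / (Fintype.card V : ℝ) := by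
  have key : ∀ z : V → A, confType z i = (∑ v : V, if z v = i then (1:ℝ) else 0) / (Fintype.card V : ℝ) := by
    intro z
    rw [confType, Finset.card_filter]
    push_cast
    rfl
  rw [key, key, div_sub_div_same, ← Finset.sum_sub_distrib]
  congr 1
  rw [Finset.sum_eq_single u]
  · rw [Function.update_self]
  · intro v _ hv
    rw [Function.update_of_ne hv, sub_self]
  · intro h
    exact absurd (Finset.mem_univ u) h

end Comb

section Comb2
variable {V A : Type*} [Fintype V] [DecidableEq V] [Fintype A] [DecidableEq A]
  (E : Finset (V × V)) (ρ : ℝ) (P : A → A → ℝ) (φ : A → A → A → ℝ)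

lemma wgt_nonneg (hρ0 : 0 ≤ ρ) (hρ1 : ρ ≤ 1) (hP : ∀ i j, 0 ≤ P i j)
    (hφ : ∀ i j ℓ, 0 ≤ φ i j ℓ) (x : V → A) (u : V) (a : A) :
    0 ≤ wgt E ρ P φ x u a := by
  unfold wgt
  have h1 : (0:ℝ) ≤ (1 - ρ) * (1 / (Fintype.card V : ℝ)) * P (x u) a := by
    apply mul_nonneg (mul_nonneg (by linarith) (by positivity)) (hP _ _)
  have h2 : (0:ℝ) ≤ (ρ / (E.card : ℝ)) * ∑ e ∈ E.filter fun e => e.1 = u, φ (x u) a (x e.2) := by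
    apply mul_nonneg (by positivity)
    exact Finset.sum_nonneg fun e _ => hφ _ _ _
  linarith

lemma card_fiber_sum : ∑ u : V, ((E.filter fun e => e.1 = u).card : ℝ) = (E.card : ℝ) := by
  have := Finset.sum_fiberwise E (fun e => e.1) (fun _ => (1:ℝ))
  simpa [Finset.sum_const, nsmul_eq_mul] using this

lemma sum_wgt_all (hn : (Fintype.card V : ℝ) ≠ 0) (hm : (E.card : ℝ) ≠ 0)
    (hP : ∀ i, ∑ j, P i j = 1) (hφ : ∀ i ℓ, ∑ j, φ i j ℓ = 1) (x : V → A) :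
    ∑ u : V, ∑ a : A, wgt E ρ P φ x u a = 1 := by
  have hrow : ∀ u : V, ∑ a : A, wgt E ρ P φ x u a
      = (1 - ρ) * (1 / (Fintype.card V : ℝ)) + (ρ / (E.card : ℝ)) * ((E.filter fun e => e.1 = u).card : ℝ) := by
    intro u
    unfold wgt
    rw [Finset.sum_add_distrib]
    congr 1
    · rw [← Finset.mul_sum, hP, mul_one]
    · rw [← Finset.mul_sum]
      congr 1
      rw [Finset.sum_comm, Finset.card_eq_sum_ones, Nat.cast_sum]
      apply Finset.sum_congr rfl
      intro e _
      rw [hφ]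
      norm_num
  rw [Finset.sum_congr rfl (fun u _ => hrow u), Finset.sum_add_distrib, Finset.sum_const,
    ← Finset.mul_sum, card_fiber_sum]
  field_simp
  rw [Finset.card_univ, nsmul_eq_mul]
  have key : (Fintype.card V : ℝ) * ((1 - ρ) / (Fintype.card V : ℝ)) = 1 - ρ := by field_simp
  linarith

lemma sum_wgt_le_one (hρ0 : 0 ≤ ρ) (hρ1 : ρ ≤ 1) (hP : ∀ i j, 0 ≤ P i j)
    (hP1 : ∀ i, ∑ j, P i j = 1) (hφ : ∀ i j ℓ, 0 ≤ φ i j ℓ) (hφ1 : ∀ i ℓ, ∑ j, φ i j ℓ = 1)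
    (hn : (Fintype.card V : ℝ) ≠ 0) (hm : (E.card : ℝ) ≠ 0) (x : V → A) :
    ∑ p ∈ (Finset.univ ×ˢ Finset.univ).filter (fun p : V × A => p.2 ≠ x p.1),
      wgt E ρ P φ x p.1 p.2 ≤ 1 := by
  have h := sum_wgt_all E ρ P φ hn hm hP1 hφ1 x
  rw [← Finset.sum_product'] at h
  rw [← h]
  apply Finset.sum_le_sum_of_subset_of_nonneg (Finset.filter_subset _ _)
  intro p _ _
  exact wgt_nonneg E ρ P φ hρ0 hρ1 hP hφ x p.1 p.2

lemma pinTrans_row_sum (x : V → A) : ∑ y : V → A, pinTrans E ρ P φ x y = 1 := by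
  unfold pinTrans
  rw [← Finset.add_sum_erase _ _ (Finset.mem_univ x), if_pos rfl]
  have h2 : ∑ y ∈ Finset.univ.erase x, (if x = y then 1 - ∑ z : V → A, Toff E ρ P φ x z
      else Toff E ρ P φ x y) = ∑ y ∈ Finset.univ.erase x, Toff E ρ P φ x y := by
    apply Finset.sum_congr rfl
    intro y hy
    rw [if_neg (Ne.symm (Finset.mem_erase.mp hy).1)]
  rw [h2, Finset.sum_erase_eq_sub (Finset.mem_univ x), Toff_self]
  ring

lemma sum_nodes (x : V → A) (G : A → ℝ) :
    ∑ u : V, G (x u) = ∑ j : A, ((Finset.univ.filter fun v => x v = j).card : ℝ) * G j := by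
  rw [← Finset.sum_fiberwise Finset.univ (fun v => x v) (fun v => G (x v))]
  apply Finset.sum_congr rfl
  intro j _
  rw [Finset.card_eq_sum_ones, Nat.cast_sum, Finset.sum_mul]
  apply Finset.sum_congr rfl
  intro v hv
  simp only [Finset.mem_filter] at hv
  rw [hv.2]
  norm_num

lemma sum_edges (x : V → A) (F : A → A → ℝ) :
    ∑ e ∈ E, F (x e.1) (x e.2)
      = ∑ q : A × A, ((E.filter fun e => x e.1 = q.1 ∧ x e.2 = q.2).card : ℝ) * F q.1 q.2 := by
  rw [← Finset.sum_fiberwise E (fun e => (x e.1, x e.2)) (fun e => F (x e.1) (x e.2))]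
  apply Finset.sum_congr rfl
  intro q _
  have : (E.filter fun e => (x e.1, x e.2) = q) = E.filter fun e => x e.1 = q.1 ∧ x e.2 = q.2 := by
    apply Finset.filter_congr
    intro e _
    simp [Prod.ext_iff]
  rw [← this, Finset.card_eq_sum_ones, Nat.cast_sum, Finset.sum_mul]
  apply Finset.sum_congr rfl
  intro e he
  simp only [Finset.mem_filter] at he
  rw [← he.2]
  norm_num

lemma sum_confType (hn : (Fintype.card V : ℝ) ≠ 0) (x : V → A) : ∑ i : A, confType x i = 1 := by
  unfold confType
  rw [← Finset.sum_div]
  rw [div_eq_one_iff_eq hn]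
  have := Finset.sum_fiberwise Finset.univ (fun v : V => x v) (fun _ => (1:ℝ))
  simp only [Finset.sum_const, nsmul_eq_mul, mul_one] at this
  rw [Finset.card_univ] at this
  exact this

end Comb2

section Analysis
variable {A : Type*} [Fintype A] [DecidableEq A]

lemma clm_pi_decomp (L : (A → ℝ) →L[ℝ] ℝ) (v : A → ℝ) :
    L v = ∑ a : A, v a * L (fun j => if a = j then 1 else 0) := by
  conv_lhs => rw [pi_eq_sum_univ v]
  rw [map_sum]
  apply Finset.sum_congr rfl
  intro a _
  rw [map_smul, smul_eq_mul]

lemma exists_C1 {W : (A → ℝ) → ℝ} (hW : ContDiff ℝ 2 W) :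
    ∃ C1 : ℝ, 0 ≤ C1 ∧ ∀ θ ∈ Metric.closedBall (0 : A → ℝ) 1, ‖fderiv ℝ W θ‖ ≤ C1 := by
  have hcont : Continuous fun θ => fderiv ℝ W θ := hW.continuous_fderiv (by norm_num)
  obtain ⟨C, hC⟩ := (isCompact_closedBall (0 : A → ℝ) 1).exists_bound_of_continuousOn
    hcont.continuousOn
  exact ⟨max C 0, le_max_right _ _, fun θ hθ => le_trans (hC θ hθ) (le_max_left _ _)⟩

lemma exists_C2 {W : (A → ℝ) → ℝ} (hW : ContDiff ℝ 2 W) :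
    ∃ C2 : ℝ, 0 ≤ C2 ∧ ∀ u ∈ Metric.closedBall (0 : A → ℝ) 1, ∀ v ∈ Metric.closedBall (0 : A → ℝ) 1,
      ‖fderiv ℝ W u - fderiv ℝ W v‖ ≤ C2 * ‖u - v‖ := by
  have hF : ContDiff ℝ 1 (fderiv ℝ W) := hW.fderiv_right (by norm_num)
  have hcont : Continuous fun θ => fderiv ℝ (fderiv ℝ W) θ := hF.continuous_fderiv (by norm_num)
  obtain ⟨C, hC⟩ := (isCompact_closedBall (0 : A → ℝ) 1).exists_bound_of_continuousOn
    (E := (A → ℝ) →L[ℝ] (A → ℝ) →L[ℝ] ℝ) hcont.continuousOn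
  refine ⟨max C 0, le_max_right _ _, fun u hu v hv => ?_⟩
  exact Convex.norm_image_sub_le_of_norm_fderiv_le
    (fun z _ => (hF.differentiable one_ne_zero).differentiableAt)
    (fun z hz => le_trans (hC z hz) (le_max_left _ _))
    (convex_closedBall _ _) hv hu

lemma taylor_bound {W : (A → ℝ) → ℝ} (hdiff : Differentiable ℝ W) {C2 : ℝ} (hC2 : 0 ≤ C2)
    (hLip : ∀ u ∈ Metric.closedBall (0 : A → ℝ) 1, ∀ v ∈ Metric.closedBall (0 : A → ℝ) 1,
      ‖fderiv ℝ W u - fderiv ℝ W v‖ ≤ C2 * ‖u - v‖)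
    {a b : A → ℝ} (ha : a ∈ Metric.closedBall (0 : A → ℝ) 1)
    (hb : b ∈ Metric.closedBall (0 : A → ℝ) 1) :
    |W b - W a - fderiv ℝ W a (b - a)| ≤ C2 * ‖b - a‖ ^ 2 := by
  set L := fderiv ℝ W a with hL
  set g : (A → ℝ) → ℝ := fun u => W u - L u with hg
  have hgdiff : ∀ u : A → ℝ, DifferentiableAt ℝ g u :=
    fun u => (hdiff u).sub (L.differentiableAt)
  have hgderiv : ∀ u : A → ℝ, fderiv ℝ g u = fderiv ℝ W u - L := by
    intro u
    rw [hg]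
    rw [fderiv_fun_sub (hdiff u) L.differentiableAt, L.fderiv]
  have hseg : segment ℝ a b ⊆ Metric.closedBall (0 : A → ℝ) 1 :=
    (convex_closedBall _ _).segment_subset ha hb
  have hub : ∀ u ∈ segment ℝ a b, ‖u - a‖ ≤ ‖b - a‖ := by
    intro u hu
    rw [segment_eq_image' ℝ a b] at hu
    obtain ⟨t, ht, rfl⟩ := hu
    rw [add_sub_cancel_left, norm_smul, Real.norm_eq_abs, abs_of_nonneg ht.1]
    nlinarith [norm_nonneg (b - a), ht.2]
  have key : ‖g b - g a‖ ≤ (C2 * ‖b - a‖) * ‖b - a‖ := by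
    apply Convex.norm_image_sub_le_of_norm_fderiv_le (fun u _ => hgdiff u)
      (fun u hu => ?_) (convex_segment a b) (left_mem_segment ℝ a b) (right_mem_segment ℝ a b)
    rw [hgderiv u]
    calc ‖fderiv ℝ W u - L‖ ≤ C2 * ‖u - a‖ := hLip u (hseg hu) a ha
    _ ≤ C2 * ‖b - a‖ := mul_le_mul_of_nonneg_left (hub u hu) hC2
  have hexp : g b - g a = W b - W a - L (b - a) := by
    rw [hg]
    simp only [map_sub]
    ring
  rw [hexp] at key
  rw [← Real.norm_eq_abs, hL]
  calc ‖W b - W a - fderiv ℝ W a (b - a)‖ ≤ C2 * ‖b - a‖ * ‖b - a‖ := key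
  _ = C2 * ‖b - a‖ ^ 2 := by ring

end Analysis

section Gap
variable {V : Type*} [Fintype V] [DecidableEq V] (E : Finset (V × V))

lemma gap_bddAbove (hn2 : (2:ℝ) ≤ (Fintype.card V : ℝ)) :
    BddAbove {w : ℝ | ∃ S U : Finset V, Disjoint S U ∧
      w = |((E.filter fun e => e.1 ∈ S ∧ e.2 ∈ U).card : ℝ) / (E.card : ℝ) -
        ((S.card : ℝ) * (U.card : ℝ)) / ((Fintype.card V : ℝ) * ((Fintype.card V : ℝ) - 1))|} := by
  use 3
  rintro w ⟨S, U, _, rfl⟩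
  set d := (Fintype.card V : ℝ)
  have h1 : (0:ℝ) ≤ ((E.filter fun e => e.1 ∈ S ∧ e.2 ∈ U).card : ℝ) / (E.card : ℝ) := by positivity
  have h2 : ((E.filter fun e => e.1 ∈ S ∧ e.2 ∈ U).card : ℝ) / (E.card : ℝ) ≤ 1 := by
    rcases Nat.eq_zero_or_pos E.card with h | h
    · rw [Finset.card_eq_zero] at h
      subst h
      simp
    · rw [div_le_one (by exact_mod_cast h)]
      exact_mod_cast Finset.card_le_card (Finset.filter_subset _ _)
  have hd1 : (0:ℝ) < d - 1 := by linarith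
  have hd0 : (0:ℝ) < d := by linarith
  have hS : (S.card : ℝ) ≤ d := by
    simp only [d]
    exact_mod_cast Finset.card_le_univ S
  have hU : (U.card : ℝ) ≤ d := by
    simp only [d]
    exact_mod_cast Finset.card_le_univ U
  have hS0 : (0:ℝ) ≤ (S.card : ℝ) := by positivity
  have hU0 : (0:ℝ) ≤ (U.card : ℝ) := by positivity
  have h3 : (0:ℝ) ≤ ((S.card : ℝ) * (U.card : ℝ)) / (d * (d - 1)) := by positivity
  have h4 : ((S.card : ℝ) * (U.card : ℝ)) / (d * (d - 1)) ≤ 2 := by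
    rw [div_le_iff₀ (by positivity)]
    nlinarith
  rw [abs_sub_le_iff]
  constructor <;> linarith

lemma gap_le (hn2 : (2:ℝ) ≤ (Fintype.card V : ℝ)) {S U : Finset V} (h : Disjoint S U) :
    |((E.filter fun e => e.1 ∈ S ∧ e.2 ∈ U).card : ℝ) / (E.card : ℝ) -
      ((S.card : ℝ) * (U.card : ℝ)) / ((Fintype.card V : ℝ) * ((Fintype.card V : ℝ) - 1))|
      ≤ mixingGap E :=
  le_csSup (gap_bddAbove E hn2) ⟨S, U, h, rfl⟩

lemma mixingGap_nonneg (hn2 : (2:ℝ) ≤ (Fintype.card V : ℝ)) : 0 ≤ mixingGap E := by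
  have h := gap_le E hn2 (S := ∅) (U := ∅) (Finset.disjoint_empty_left _)
  exact le_trans (abs_nonneg _) h

/-- four-way split of the edge count by membership of endpoints in `S`. -/
lemma four_split (S : Finset V) :
    (E.filter fun e => e.1 ∈ S ∧ e.2 ∈ S).card
      + (E.filter fun e => e.1 ∈ S ∧ e.2 ∈ Sᶜ).card
      + (E.filter fun e => e.1 ∈ Sᶜ ∧ e.2 ∈ S).card
      + (E.filter fun e => e.1 ∈ Sᶜ ∧ e.2 ∈ Sᶜ).card = E.card := by
  classical
  rw [Finset.card_filter, Finset.card_filter, Finset.card_filter, Finset.card_filter,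
    ← Finset.sum_add_distrib, ← Finset.sum_add_distrib, ← Finset.sum_add_distrib,
    Finset.card_eq_sum_ones]
  apply Finset.sum_congr rfl
  intro e _
  by_cases h1 : e.1 ∈ S <;> by_cases h2 : e.2 ∈ S <;> simp [h1, h2]

end Gap

section Powerset
variable {V : Type*} [Fintype V] [DecidableEq V]

lemma count_mem_not_mem {a b : V} (S : Finset V) (ha : a ∈ S) (hb : b ∈ S) (hab : a ≠ b) :
    ((S.powerset).filter (fun T => a ∈ T ∧ b ∉ T)).card = 2 ^ (S.card - 2) := by
  have hcard : (((S.erase b).erase a).powerset).card = 2 ^ (S.card - 2) := by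
    rw [Finset.card_powerset, Finset.card_erase_of_mem (Finset.mem_erase.mpr ⟨hab, ha⟩),
      Finset.card_erase_of_mem hb, Nat.sub_sub]
  rw [← hcard]
  refine Finset.card_bij' (fun T _ => T.erase a) (fun T' _ => insert a T') ?hi ?hj ?hl ?hr
  case hi =>
    intro T hT
    simp only [Finset.mem_filter, Finset.mem_powerset] at hT
    rw [Finset.mem_powerset]
    intro x hx
    rw [Finset.mem_erase] at hx
    refine Finset.mem_erase.mpr ⟨hx.1, Finset.mem_erase.mpr ⟨?_, hT.1 hx.2⟩⟩
    rintro rfl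
    exact hT.2.2 hx.2
  case hj =>
    intro T' hT'
    rw [Finset.mem_powerset] at hT'
    simp only [Finset.mem_filter, Finset.mem_powerset]
    have hb' : b ∉ T' := by
      intro hmem
      exact (Finset.mem_erase.mp (Finset.mem_of_mem_erase (hT' hmem))).1 rfl
    refine ⟨?_, Finset.mem_insert_self a T', ?_⟩
    · intro x hx
      rcases Finset.mem_insert.mp hx with rfl | hx'
      · exact ha
      · exact Finset.mem_of_mem_erase (Finset.mem_of_mem_erase (hT' hx'))
    · intro hmem
      rcases Finset.mem_insert.mp hmem with h | h
      · exact hab h.symm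
      · exact hb' h
  case hl =>
    intro T hT
    simp only [Finset.mem_filter] at hT
    exact Finset.insert_erase hT.2.1
  case hr =>
    intro T' hT'
    rw [Finset.mem_powerset] at hT'
    apply Finset.erase_insert
    intro hmem
    exact (Finset.mem_erase.mp (hT' hmem)).1 rfl

lemma count_self_empty {a : V} (S : Finset V) :
    ((S.powerset).filter (fun T => a ∈ T ∧ a ∉ T)) = ∅ := by
  apply Finset.filter_false_of_mem
  rintro T _ ⟨h1, h2⟩
  exact h2 h1

/-- Averaged cross-count identity over the powerset. -/
lemma sum_powerset_cross (E : Finset (V × V)) (hE : ∀ e ∈ E, e.1 ≠ e.2) (S : Finset V) :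
    ∑ T ∈ S.powerset, (((E.filter fun e => e.1 ∈ T ∧ e.2 ∈ S \ T).card : ℝ)
        + ((E.filter fun e => e.1 ∈ S \ T ∧ e.2 ∈ T).card : ℝ))
      = 2 ^ (S.card - 2) * (2 * ((E.filter fun e => e.1 ∈ S ∧ e.2 ∈ S).card : ℝ)) := by
  have key : ∀ T ∈ S.powerset,
      ((E.filter fun e => e.1 ∈ T ∧ e.2 ∈ S \ T).card : ℝ)
          + ((E.filter fun e => e.1 ∈ S \ T ∧ e.2 ∈ T).card : ℝ)
        = ∑ e ∈ E, ((if e.1 ∈ T ∧ e.2 ∈ S ∧ e.2 ∉ T then (1:ℝ) else 0)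
            + (if e.2 ∈ T ∧ e.1 ∈ S ∧ e.1 ∉ T then (1:ℝ) else 0)) := by
    intro T _
    have e1 : (E.filter fun e => e.1 ∈ T ∧ e.2 ∈ S \ T)
        = E.filter fun e => e.1 ∈ T ∧ e.2 ∈ S ∧ e.2 ∉ T := by
      apply Finset.filter_congr
      intro e _
      rw [Finset.mem_sdiff]
    have e2 : (E.filter fun e => e.1 ∈ S \ T ∧ e.2 ∈ T)
        = E.filter fun e => e.2 ∈ T ∧ e.1 ∈ S ∧ e.1 ∉ T := by
      apply Finset.filter_congr
      intro e _
      rw [Finset.mem_sdiff]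
      tauto
    rw [e1, e2, Finset.sum_add_distrib, Finset.sum_boole, Finset.sum_boole]
  rw [Finset.sum_congr rfl key, Finset.sum_comm]
  have per_edge : ∀ e ∈ E,
      (∑ T ∈ S.powerset, ((if e.1 ∈ T ∧ e.2 ∈ S ∧ e.2 ∉ T then (1:ℝ) else 0)
          + (if e.2 ∈ T ∧ e.1 ∈ S ∧ e.1 ∉ T then (1:ℝ) else 0)))
        = 2 ^ (S.card - 2) * (2 * (if e.1 ∈ S ∧ e.2 ∈ S then (1:ℝ) else 0)) := by
    intro e he
    rw [Finset.sum_add_distrib, Finset.sum_boole, Finset.sum_boole]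
    by_cases h1 : e.1 ∈ S
    · by_cases h2 : e.2 ∈ S
      · have c1 : (S.powerset.filter fun T => e.1 ∈ T ∧ e.2 ∈ S ∧ e.2 ∉ T)
            = (S.powerset.filter fun T => e.1 ∈ T ∧ e.2 ∉ T) := by
          apply Finset.filter_congr
          intro T _
          simp [h2]
        have c2 : (S.powerset.filter fun T => e.2 ∈ T ∧ e.1 ∈ S ∧ e.1 ∉ T)
            = (S.powerset.filter fun T => e.2 ∈ T ∧ e.1 ∉ T) := by
          apply Finset.filter_congr
          intro T _
          simp [h1]
        rw [c1, c2, count_mem_not_mem S h1 h2 (hE e he),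
          count_mem_not_mem S h2 h1 (Ne.symm (hE e he)), if_pos ⟨h1, h2⟩]
        push_cast
        ring
      · have c1 : (S.powerset.filter fun T => e.1 ∈ T ∧ e.2 ∈ S ∧ e.2 ∉ T) = ∅ := by
          apply Finset.filter_false_of_mem
          rintro T _ ⟨-, hm, -⟩
          exact h2 hm
        have c2 : (S.powerset.filter fun T => e.2 ∈ T ∧ e.1 ∈ S ∧ e.1 ∉ T) = ∅ := by
          apply Finset.filter_false_of_mem
          intro T hT
          rw [Finset.mem_powerset] at hT
          rintro ⟨hm, -, -⟩
          exact h2 (hT hm)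
        rw [c1, c2, if_neg (by tauto)]
        simp
    · have c1 : (S.powerset.filter fun T => e.1 ∈ T ∧ e.2 ∈ S ∧ e.2 ∉ T) = ∅ := by
        apply Finset.filter_false_of_mem
        intro T hT
        rw [Finset.mem_powerset] at hT
        rintro ⟨hm, -, -⟩
        exact h1 (hT hm)
      have c2 : (S.powerset.filter fun T => e.2 ∈ T ∧ e.1 ∈ S ∧ e.1 ∉ T) = ∅ := by
        apply Finset.filter_false_of_mem
        rintro T _ ⟨-, hm, -⟩
        exact h1 hm
      rw [c1, c2, if_neg (by tauto)]
      simp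
  rw [Finset.sum_congr rfl per_edge, ← Finset.mul_sum, ← Finset.mul_sum, Finset.sum_boole]

/-- Averaged ideal cross identity over the powerset. -/
lemma sum_powerset_ideal (S : Finset V) :
    ∑ T ∈ S.powerset, ((T.card : ℝ) * (((S \ T).card : ℝ)))
      = 2 ^ (S.card - 2) * ((S.card : ℝ) * ((S.card : ℝ) - 1)) := by
  have key : ∀ T ∈ S.powerset, (T.card : ℝ) * (((S \ T).card : ℝ))
      = ∑ a ∈ S, ∑ b ∈ S, (if a ∈ T ∧ b ∉ T then (1:ℝ) else 0) := by
    intro T hT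
    rw [Finset.mem_powerset] at hT
    have h1 : (T.card : ℝ) = ∑ a ∈ S, (if a ∈ T then (1:ℝ) else 0) := by
      rw [Finset.sum_boole]
      congr 1
      rw [Finset.filter_mem_eq_inter, Finset.inter_eq_right.mpr hT]
    have h2 : (((S \ T).card : ℝ)) = ∑ b ∈ S, (if b ∉ T then (1:ℝ) else 0) := by
      rw [Finset.sum_boole]
      congr 1
      rw [Finset.sdiff_eq_filter]
    rw [h1, h2, Finset.sum_mul_sum]
    apply Finset.sum_congr rfl
    intro a _
    apply Finset.sum_congr rfl
    intro b _
    by_cases hA : a ∈ T <;> by_cases hB : b ∉ T <;> simp [hA, hB]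
  rw [Finset.sum_congr rfl key]
  have swap : ∑ T ∈ S.powerset, ∑ a ∈ S, ∑ b ∈ S, (if a ∈ T ∧ b ∉ T then (1:ℝ) else 0)
      = ∑ a ∈ S, ∑ b ∈ S, ∑ T ∈ S.powerset, (if a ∈ T ∧ b ∉ T then (1:ℝ) else 0) := by
    rw [Finset.sum_comm]
    apply Finset.sum_congr rfl
    intro a _
    rw [Finset.sum_comm]
  rw [swap]
  have inner : ∀ a ∈ S, ∑ b ∈ S, ∑ T ∈ S.powerset, (if a ∈ T ∧ b ∉ T then (1:ℝ) else 0)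
      = ((S.card : ℝ) - 1) * 2 ^ (S.card - 2) := by
    intro a ha
    have perb : ∀ b ∈ S, ∑ T ∈ S.powerset, (if a ∈ T ∧ b ∉ T then (1:ℝ) else 0)
        = if b = a then 0 else (2:ℝ) ^ (S.card - 2) := by
      intro b hb
      rw [Finset.sum_boole]
      rcases eq_or_ne b a with rfl | hba
      · rw [count_self_empty, if_pos rfl]
        simp
      · rw [count_mem_not_mem S ha hb (Ne.symm hba), if_neg hba]
        push_cast
        ring
    rw [Finset.sum_congr rfl perb]
    have split : ∑ b ∈ S, (if b = a then (0:ℝ) else (2:ℝ) ^ (S.card - 2))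
        = ∑ b ∈ S, (2:ℝ) ^ (S.card - 2) - ∑ b ∈ S, (if b = a then (2:ℝ) ^ (S.card - 2) else 0) := by
      rw [← Finset.sum_sub_distrib]
      apply Finset.sum_congr rfl
      intro b _
      by_cases hba : b = a <;> simp [hba]
    rw [split, Finset.sum_ite_eq' S a (fun _ => (2:ℝ) ^ (S.card - 2)), if_pos ha,
      Finset.sum_const, nsmul_eq_mul]
    ring
  rw [Finset.sum_congr rfl inner, Finset.sum_const, nsmul_eq_mul]
  push_cast
  ring

end Powerset

section GapBound
variable {V : Type*} [Fintype V] [DecidableEq V]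

lemma diag_gap_le (E : Finset (V × V)) (hE : ∀ e ∈ E, e.1 ≠ e.2)
    (hn2 : (2:ℝ) ≤ (Fintype.card V : ℝ)) (S : Finset V) :
    |((E.filter fun e => e.1 ∈ S ∧ e.2 ∈ S).card : ℝ) / (E.card : ℝ) -
      ((S.card : ℝ) * ((S.card : ℝ) - 1)) / ((Fintype.card V : ℝ) * ((Fintype.card V : ℝ) - 1))|
      ≤ 4 * mixingGap E := by
  set d := (Fintype.card V : ℝ) with hd
  set W := mixingGap E with hW
  have hW0 : 0 ≤ W := mixingGap_nonneg E hn2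
  by_cases hs : 2 ≤ S.card
  · -- averaging argument
    set m := (E.card : ℝ) with hm
    set dd := d * (d - 1) with hdd
    set K := (2:ℝ) ^ (S.card - 2) with hK
    have hK0 : (0:ℝ) < K := by positivity
    set f : Finset V → ℝ := fun T =>
      (((E.filter fun e => e.1 ∈ T ∧ e.2 ∈ S \ T).card : ℝ)
        + ((E.filter fun e => e.1 ∈ S \ T ∧ e.2 ∈ T).card : ℝ)) / m
      - (2 / dd) * ((T.card : ℝ) * (((S \ T).card : ℝ))) with hf
    have per : ∀ T ∈ S.powerset, |f T| ≤ 2 * W := by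
      intro T _
      have g1 := gap_le E hn2 (S := T) (U := S \ T) Finset.disjoint_sdiff
      have g2 := gap_le E hn2 (S := S \ T) (U := T) Finset.sdiff_disjoint
      have hsplit : f T = (((E.filter fun e => e.1 ∈ T ∧ e.2 ∈ S \ T).card : ℝ) / m
            - ((T.card : ℝ) * (((S \ T).card : ℝ))) / dd)
          + (((E.filter fun e => e.1 ∈ S \ T ∧ e.2 ∈ T).card : ℝ) / m
            - ((((S \ T).card : ℝ)) * (T.card : ℝ)) / dd) := by
        rw [hf]
        ring
      rw [hsplit]
      calc |_ + _| ≤ _ + _ := abs_add_le _ _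
      _ ≤ W + W := add_le_add g1 g2
      _ = 2 * W := by ring
    have habs : |∑ T ∈ S.powerset, f T| ≤ 2 ^ S.card * (2 * W) := by
      calc |∑ T ∈ S.powerset, f T| ≤ ∑ T ∈ S.powerset, |f T| :=
            Finset.abs_sum_le_sum_abs _ _
      _ ≤ ∑ T ∈ S.powerset, 2 * W := Finset.sum_le_sum per
      _ = 2 ^ S.card * (2 * W) := by
          rw [Finset.sum_const, Finset.card_powerset, nsmul_eq_mul]
          push_cast
          ring
    have heq : ∑ T ∈ S.powerset, f T
        = 2 * K * (((E.filter fun e => e.1 ∈ S ∧ e.2 ∈ S).card : ℝ) / m)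
          - 2 * K * (((S.card : ℝ) * ((S.card : ℝ) - 1)) / dd) := by
      rw [hf]
      simp only
      rw [Finset.sum_sub_distrib, ← Finset.sum_div, ← Finset.mul_sum,
        sum_powerset_cross E hE S, sum_powerset_ideal S]
      rw [← hK]
      ring
    have hpow : (2:ℝ) ^ S.card = 4 * K := by
      have h2 : S.card - 2 + 2 = S.card := by omega
      calc (2:ℝ) ^ S.card = 2 ^ (S.card - 2 + 2) := by rw [h2]
      _ = 2 ^ (S.card - 2) * 2 ^ 2 := pow_add 2 _ _
      _ = 4 * K := by rw [hK]; ring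
    rw [heq] at habs
    have hfactor : 2 * K * (((E.filter fun e => e.1 ∈ S ∧ e.2 ∈ S).card : ℝ) / m)
          - 2 * K * (((S.card : ℝ) * ((S.card : ℝ) - 1)) / dd)
        = (2 * K) * (((E.filter fun e => e.1 ∈ S ∧ e.2 ∈ S).card : ℝ) / m
          - ((S.card : ℝ) * ((S.card : ℝ) - 1)) / dd) := by ring
    rw [hfactor, abs_mul, abs_of_pos (by positivity : (0:ℝ) < 2 * K), hpow] at habs
    have := (mul_le_mul_iff_right₀ (by positivity : (0:ℝ) < 2 * K)).mp
      (by linarith [habs] :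
        (2 * K) * |((E.filter fun e => e.1 ∈ S ∧ e.2 ∈ S).card : ℝ) / m
          - ((S.card : ℝ) * ((S.card : ℝ) - 1)) / dd| ≤ (2 * K) * (4 * W))
    exact this
  · -- small S : both sides vanish
    have hempty : (E.filter fun e => e.1 ∈ S ∧ e.2 ∈ S) = ∅ := by
      apply Finset.filter_false_of_mem
      rintro e he ⟨h1, h2⟩
      have : 1 < S.card := Finset.one_lt_card.mpr ⟨e.1, h1, e.2, h2, hE e he⟩
      omega
    have hcases : S.card = 0 ∨ S.card = 1 := by omega
    have hzero : ((S.card : ℝ) * ((S.card : ℝ) - 1)) = 0 := by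
      rcases hcases with h | h <;> rw [h] <;> norm_num
    rw [hempty, hzero]
    simp
    positivity

end GapBound

section BoundaryBound
variable {V A : Type*} [Fintype V] [DecidableEq V] [Fintype A] [DecidableEq A]

lemma boundary_prod_bound (E : Finset (V × V)) (hE : ∀ e ∈ E, e.1 ≠ e.2)
    (hn2 : (2:ℝ) ≤ (Fintype.card V : ℝ)) (x : V → A) (i j : A) :
    |boundary E x i j - confType x i * confType x j|
      ≤ 4 * mixingGap E + 1 / ((Fintype.card V : ℝ) - 1) := by
  set d := (Fintype.card V : ℝ) with hd
  have hd0 : (0:ℝ) < d := by linarith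
  have hd1 : (0:ℝ) < d - 1 := by linarith
  set W := mixingGap E with hW
  have hW0 : 0 ≤ W := mixingGap_nonneg E hn2
  set S := Finset.univ.filter (fun v => x v = i) with hS
  set U := Finset.univ.filter (fun v => x v = j) with hU
  set s := (S.card : ℝ) with hs
  set u := (U.card : ℝ) with hu
  have hs0 : 0 ≤ s := by positivity
  have hu0 : 0 ≤ u := by positivity
  have hsd : s ≤ d := by
    rw [hs, hd]
    exact_mod_cast Finset.card_le_univ S
  have hud : u ≤ d := by
    rw [hu, hd]
    exact_mod_cast Finset.card_le_univ U
  have hfilter : (E.filter fun e => x e.1 = i ∧ x e.2 = j)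
      = E.filter (fun e => e.1 ∈ S ∧ e.2 ∈ U) := by
    apply Finset.filter_congr
    intro e _
    simp [hS, hU]
  have hbound : boundary E x i j
      = ((E.filter fun e => e.1 ∈ S ∧ e.2 ∈ U).card : ℝ) / (E.card : ℝ) := by
    rw [boundary, hfilter]
  have hci : confType x i = s / d := rfl
  have hcj : confType x j = u / d := rfl
  rcases eq_or_ne i j with rfl | hij
  · -- diagonal case
    have hUS : U = S := rfl
    have h1 := diag_gap_le E hE hn2 S
    have key : |s * (s - 1) / (d * (d - 1)) - (s / d) * (s / d)| ≤ 1 / (d - 1) := by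
      have hX : s * (s - 1) / (d * (d - 1)) - (s / d) * (s / d)
          = (s * (s - d)) / (d ^ 2 * (d - 1)) := by
        field_simp
        ring
      rw [hX, abs_div, abs_of_pos (by positivity : (0:ℝ) < d ^ 2 * (d - 1)),
        div_le_div_iff₀ (by positivity) hd1]
      have : |s * (s - d)| = s * (d - s) := by
        rw [abs_of_nonpos (by nlinarith : s * (s - d) ≤ 0)]
        ring
      rw [this]
      nlinarith [mul_le_mul hsd (by linarith : d - s ≤ d) (by linarith) (by linarith : (0:ℝ) ≤ d), hd1]
    rw [hbound, hci, hUS]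
    calc |((E.filter fun e => e.1 ∈ S ∧ e.2 ∈ S).card : ℝ) / (E.card : ℝ) - s / d * (s / d)|
        ≤ |((E.filter fun e => e.1 ∈ S ∧ e.2 ∈ S).card : ℝ) / (E.card : ℝ)
            - s * (s - 1) / (d * (d - 1))| + |s * (s - 1) / (d * (d - 1)) - s / d * (s / d)| := by
          apply abs_sub_le
    _ ≤ 4 * W + 1 / (d - 1) := add_le_add h1 key
  · -- off-diagonal case
    have hdisj : Disjoint S U := by
      rw [Finset.disjoint_left]
      intro v hv1 hv2
      rw [hS, Finset.mem_filter] at hv1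
      rw [hU, Finset.mem_filter] at hv2
      exact hij (hv1.2 ▸ hv2.2 ▸ rfl)
    have h1 := gap_le E hn2 hdisj
    have key : |s * u / (d * (d - 1)) - (s / d) * (u / d)| ≤ 1 / (d - 1) := by
      have hX : s * u / (d * (d - 1)) - (s / d) * (u / d)
          = (s * u) / (d ^ 2 * (d - 1)) := by
        field_simp
        ring
      rw [hX, abs_div, abs_of_pos (by positivity : (0:ℝ) < d ^ 2 * (d - 1)),
        div_le_div_iff₀ (by positivity) hd1]
      rw [abs_of_nonneg (by positivity : (0:ℝ) ≤ s * u)]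
      nlinarith [mul_le_mul hsd hud hu0 (by linarith : (0:ℝ) ≤ d), hd1]
    rw [hbound, hci, hcj]
    calc |((E.filter fun e => e.1 ∈ S ∧ e.2 ∈ U).card : ℝ) / (E.card : ℝ) - s / d * (u / d)|
        ≤ |((E.filter fun e => e.1 ∈ S ∧ e.2 ∈ U).card : ℝ) / (E.card : ℝ)
            - s * u / (d * (d - 1))| + |s * u / (d * (d - 1)) - s / d * (u / d)| := by
          apply abs_sub_le
    _ ≤ W + 1 / (d - 1) := add_le_add h1 key
    _ ≤ 4 * W + 1 / (d - 1) := by linarith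

end BoundaryBound

section Station
variable {V A : Type*} [Fintype V] [DecidableEq V] [Fintype A] [DecidableEq A]
  (E : Finset (V × V)) (ρ : ℝ) (P : A → A → ℝ) (φ : A → A → A → ℝ)

lemma stationary_zero (μ : (V → A) → ℝ) (hμ : IsPinStationary E ρ P φ μ) (f : (V → A) → ℝ) :
    ∑ x : V → A, μ x * (∑ y : V → A, pinTrans E ρ P φ x y * (f y - f x)) = 0 := by
  obtain ⟨hpos, hsum, hst⟩ := hμ
  have per : ∀ x : V → A, μ x * (∑ y : V → A, pinTrans E ρ P φ x y * (f y - f x))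
      = (∑ y : V → A, μ x * pinTrans E ρ P φ x y * f y) - μ x * f x := by
    intro x
    rw [Finset.mul_sum]
    have expand : ∀ y, μ x * (pinTrans E ρ P φ x y * (f y - f x))
        = μ x * pinTrans E ρ P φ x y * f y - μ x * pinTrans E ρ P φ x y * f x :=
      fun y => by ring
    rw [Finset.sum_congr rfl (fun y _ => expand y), Finset.sum_sub_distrib]
    congr 1
    calc ∑ y : V → A, μ x * pinTrans E ρ P φ x y * f x
        = (∑ y : V → A, μ x * pinTrans E ρ P φ x y) * f x := (Finset.sum_mul _ _ _).symm
    _ = (μ x * ∑ y : V → A, pinTrans E ρ P φ x y) * f x := by rw [← Finset.mul_sum]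
    _ = μ x * f x := by rw [pinTrans_row_sum]; ring
  rw [Finset.sum_congr rfl (fun x _ => per x), Finset.sum_sub_distrib]
  have swap : ∑ x : V → A, ∑ y : V → A, μ x * pinTrans E ρ P φ x y * f y
      = ∑ y : V → A, μ y * f y := by
    rw [Finset.sum_comm]
    apply Finset.sum_congr rfl
    intro y _
    calc ∑ x : V → A, μ x * pinTrans E ρ P φ x y * f y
        = (∑ x : V → A, μ x * pinTrans E ρ P φ x y) * f y := (Finset.sum_mul _ _ _).symm
    _ = μ y * f y := by rw [hst y]
  rw [swap]
  exact sub_self _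

lemma confType_mem_ball (z : V → A) : confType z ∈ Metric.closedBall (0 : A → ℝ) 1 := by
  rw [mem_closedBall_zero_iff]
  apply pi_norm_le_iff_of_nonneg zero_le_one |>.mpr
  intro i
  rw [Real.norm_eq_abs, confType, abs_of_nonneg (by positivity)]
  apply div_le_one_of_le₀
  · exact_mod_cast Finset.card_le_univ _
  · positivity

lemma indicator_norm_le (b : A) : ‖(fun j => if b = j then (1:ℝ) else 0)‖ ≤ 1 := by
  apply pi_norm_le_iff_of_nonneg zero_le_one |>.mpr
  intro j
  rw [Real.norm_eq_abs]
  split_ifs <;> norm_num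

end Station

section Pointwise
variable {V A : Type*} [Fintype V] [DecidableEq V] [Fintype A] [DecidableEq A]

set_option maxHeartbeats 1000000 in
lemma pointwise_estimate (E : Finset (V × V)) (ρ : ℝ) (P : A → A → ℝ) (φ : A → A → A → ℝ)
    (hmodel : IsPinModel E ρ P φ) (hn2 : (2:ℝ) ≤ (Fintype.card V : ℝ))
    (Vf : (A → ℝ) → ℝ) (hVf : ContDiff ℝ 2 Vf) (C1 C2 : ℝ) (hC10 : 0 ≤ C1) (hC20 : 0 ≤ C2)
    (hC1 : ∀ θ ∈ Metric.closedBall (0 : A → ℝ) 1, ‖fderiv ℝ Vf θ‖ ≤ C1)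
    (hC2 : ∀ u ∈ Metric.closedBall (0 : A → ℝ) 1, ∀ v ∈ Metric.closedBall (0 : A → ℝ) 1,
      ‖fderiv ℝ Vf u - fderiv ℝ Vf v‖ ≤ C2 * ‖u - v‖)
    (x : V → A) :
    |(∑ y : V → A, pinTrans E ρ P φ x y * (Vf (confType y) - Vf (confType x)))
        - (1 / (Fintype.card V : ℝ))
          * fderiv ℝ Vf (confType x) (limitDrift ρ P φ (confType x))|
      ≤ (1 / (Fintype.card V : ℝ)) * (2 * C1 * (Fintype.card A : ℝ) ^ 2
          * (4 * mixingGap E + 1 / ((Fintype.card V : ℝ) - 1))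
        + C2 / (Fintype.card V : ℝ)) := by
  classical
  obtain ⟨hρ0, hρ1, hP, hP1, hφpos, hφ1, hEne, hEloop⟩ := hmodel
  have hdiffV : Differentiable ℝ Vf := hVf.differentiable (by norm_num)
  set d := (Fintype.card V : ℝ) with hd
  have hd0 : (0:ℝ) < d := by linarith
  have hm0 : (0:ℝ) < (E.card : ℝ) := by
    have := Finset.card_pos.mpr hEne
    exact_mod_cast this
  set θ : A → ℝ := confType x with hθ
  have hθball : θ ∈ Metric.closedBall (0 : A → ℝ) 1 := confType_mem_ball x
  have hθsum : ∑ l, θ l = 1 := sum_confType (ne_of_gt hd0) x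
  set L : (A → ℝ) →L[ℝ] ℝ := fderiv ℝ Vf θ with hL
  set Eb : A → ℝ := fun b => L (fun j => if b = j then (1:ℝ) else 0) with hEb
  have hEbB : ∀ b, |Eb b| ≤ C1 := by
    intro b
    rw [hEb]
    calc |L (fun j => if b = j then (1:ℝ) else 0)|
        = ‖L (fun j => if b = j then (1:ℝ) else 0)‖ := (Real.norm_eq_abs _).symm
    _ ≤ ‖L‖ * ‖(fun j => if b = j then (1:ℝ) else 0)‖ := L.le_opNorm _
    _ ≤ C1 * 1 := mul_le_mul (hC1 θ hθball) (indicator_norm_le b) (norm_nonneg _) hC10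
    _ = C1 := mul_one C1
  -- linear pairing with a vector
  have hdec : ∀ v : A → ℝ, L v = ∑ a, v a * Eb a := fun v => clm_pi_decomp L v
  set Ff : A → A → ℝ := fun j l => ∑ a, φ j a l * (Eb a - Eb j) with hFf
  set Gf : A → ℝ := fun j => ∑ a, P j a * (Eb a - Eb j) with hGf
  have hFex : ∀ j l, Ff j l = (∑ a, φ j a l * Eb a) - Eb j := by
    intro j l
    rw [hFf]
    simp only
    have expand : ∀ a, φ j a l * (Eb a - Eb j) = φ j a l * Eb a - φ j a l * Eb j :=
      fun a => by ring
    rw [Finset.sum_congr rfl (fun a _ => expand a), Finset.sum_sub_distrib, ← Finset.sum_mul,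
      hφ1, one_mul]
  have hGex : ∀ j, Gf j = (∑ a, P j a * Eb a) - Eb j := by
    intro j
    rw [hGf]
    simp only
    have expand : ∀ a, P j a * (Eb a - Eb j) = P j a * Eb a - P j a * Eb j :=
      fun a => by ring
    rw [Finset.sum_congr rfl (fun a _ => expand a), Finset.sum_sub_distrib, ← Finset.sum_mul,
      hP1, one_mul]
  have hFfB : ∀ j l, |Ff j l| ≤ 2 * C1 := by
    intro j l
    rw [hFex]
    have h1 : |∑ a, φ j a l * Eb a| ≤ C1 := by
      calc |∑ a, φ j a l * Eb a| ≤ ∑ a, |φ j a l * Eb a| := Finset.abs_sum_le_sum_abs _ _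
      _ ≤ ∑ a, φ j a l * C1 := by
          apply Finset.sum_le_sum
          intro a _
          rw [abs_mul, abs_of_nonneg (hφpos j a l)]
          exact mul_le_mul_of_nonneg_left (hEbB a) (hφpos j a l)
      _ = C1 := by rw [← Finset.sum_mul, hφ1, one_mul]
    calc |(∑ a, φ j a l * Eb a) - Eb j| ≤ |∑ a, φ j a l * Eb a| + |Eb j| := abs_sub _ _
    _ ≤ C1 + C1 := add_le_add h1 (hEbB j)
    _ = 2 * C1 := by ring
  -- the drift sum over all (u,a) pairs
  set Dr : ℝ := ∑ u : V, ∑ a : A, wgt E ρ P φ x u a * (Eb a - Eb (x u)) with hDr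
  -- p1, pd, r1
  set p1 : ℝ := ∑ j, θ j * ∑ a, P j a * Eb a with hp1
  set pd : ℝ := ∑ j, θ j * Eb j with hpd
  set r1 : ℝ := ∑ j, ∑ l, (θ j * θ l) * ∑ a, φ j a l * Eb a with hr1
  set Sξ : ℝ := ∑ j, ∑ l, boundary E x j l * Ff j l with hSξ
  set Sθ : ℝ := ∑ j, ∑ l, (θ j * θ l) * Ff j l with hSθ
  -- (A) drift decomposition
  have per_u : ∀ u : V, ∑ a : A, wgt E ρ P φ x u a * (Eb a - Eb (x u))
      = (1 - ρ) * (1 / d) * Gf (x u)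
        + (ρ / (E.card : ℝ)) * ∑ e ∈ E.filter fun e => e.1 = u, Ff (x e.1) (x e.2) := by
    intro u
    have split : ∀ a : A, wgt E ρ P φ x u a * (Eb a - Eb (x u))
        = (1 - ρ) * (1 / d) * (P (x u) a * (Eb a - Eb (x u)))
          + (ρ / (E.card : ℝ)) * ∑ e ∈ E.filter fun e => e.1 = u,
              φ (x u) a (x e.2) * (Eb a - Eb (x u)) := by
      intro a
      rw [wgt, add_mul, ← hd]
      congr 1
      · ring
      · rw [mul_assoc, Finset.sum_mul]
    rw [Finset.sum_congr rfl (fun a _ => split a), Finset.sum_add_distrib, ← Finset.mul_sum,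
      ← Finset.mul_sum]
    congr 1
    · congr 1
      rw [Finset.sum_comm]
      apply Finset.sum_congr rfl
      intro e he
      have he1 : e.1 = u := (Finset.mem_filter.mp he).2
      rw [hFf, he1]
  have hfibers : ∑ u : V, ∑ e ∈ E.filter fun e => e.1 = u, Ff (x e.1) (x e.2)
      = ∑ e ∈ E, Ff (x e.1) (x e.2) :=
    Finset.sum_fiberwise E (fun e => e.1) (fun e => Ff (x e.1) (x e.2))
  have hcardθ : ∀ j, ((Finset.univ.filter fun v => x v = j).card : ℝ) = θ j * d := by
    intro j
    rw [hθ, confType, hd]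
    exact (div_mul_cancel₀ _ (ne_of_gt hd0)).symm
  have hcardξ : ∀ q : A × A, ((E.filter fun e => x e.1 = q.1 ∧ x e.2 = q.2).card : ℝ)
      = boundary E x q.1 q.2 * (E.card : ℝ) := by
    intro q
    rw [boundary]
    exact (div_mul_cancel₀ _ (ne_of_gt hm0)).symm
  have hDrA : Dr = (1 - ρ) * (p1 - pd) + ρ * Sξ := by
    have step1 : Dr = (1 - ρ) * (1 / d) * (∑ u : V, Gf (x u))
        + (ρ / (E.card : ℝ)) * ∑ e ∈ E, Ff (x e.1) (x e.2) := by
      rw [hDr, Finset.sum_congr rfl (fun u _ => per_u u), Finset.sum_add_distrib,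
        ← Finset.mul_sum, ← Finset.mul_sum, hfibers]
    have step2 : ∑ u : V, Gf (x u) = d * ∑ j, θ j * Gf j := by
      rw [sum_nodes x Gf, Finset.mul_sum]
      apply Finset.sum_congr rfl
      intro j _
      rw [hcardθ j]
      ring
    have step3 : ∑ e ∈ E, Ff (x e.1) (x e.2)
        = (E.card : ℝ) * ∑ j, ∑ l, boundary E x j l * Ff j l := by
      rw [sum_edges E x Ff, Fintype.sum_prod_type, Finset.mul_sum]
      apply Finset.sum_congr rfl
      intro j _
      rw [Finset.mul_sum]
      apply Finset.sum_congr rfl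
      intro l _
      rw [hcardξ (j, l)]
      ring
    have step4 : ∑ j, θ j * Gf j = p1 - pd := by
      have perj : ∀ j, θ j * Gf j = θ j * (∑ a, P j a * Eb a) - θ j * Eb j := by
        intro j
        rw [hGex j]
        ring
      rw [Finset.sum_congr rfl (fun j _ => perj j), Finset.sum_sub_distrib, hp1, hpd]
    rw [step1, step2, step3, step4, hSξ]
    have h1 : (1/d) * d = 1 := by rw [one_div, inv_mul_cancel₀ (ne_of_gt hd0)]
    have h2 : ρ / (E.card:ℝ) * (E.card:ℝ) = ρ := div_mul_cancel₀ _ (ne_of_gt hm0)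
    linear_combination (1-ρ)*(p1-pd)*h1 + Sξ*h2
  -- (B) pairing with the limit drift
  have hp1' : ∑ i, (∑ j, P j i * θ j) * Eb i = p1 := by
    have e1 : ∀ i, (∑ j, P j i * θ j) * Eb i = ∑ j, θ j * (P j i * Eb i) := by
      intro i
      rw [Finset.sum_mul]
      exact Finset.sum_congr rfl fun j _ => by ring
    rw [Finset.sum_congr rfl (fun i _ => e1 i), Finset.sum_comm, hp1]
    apply Finset.sum_congr rfl
    intro j _
    rw [Finset.mul_sum]
  have hr1' : ∑ i, (∑ l, θ l * ∑ j, φ j i l * θ j) * Eb i = r1 := by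
    have e1 : ∀ i, (∑ l, θ l * ∑ j, φ j i l * θ j) * Eb i
        = ∑ l, ∑ j, (θ j * θ l) * (φ j i l * Eb i) := by
      intro i
      rw [Finset.sum_mul]
      apply Finset.sum_congr rfl
      intro l _
      rw [Finset.mul_sum, Finset.sum_mul]
      apply Finset.sum_congr rfl
      intro j _
      ring
    rw [Finset.sum_congr rfl (fun i _ => e1 i), Finset.sum_comm]
    have e2 : ∀ l, ∑ i, ∑ j, (θ j * θ l) * (φ j i l * Eb i)
        = ∑ j, (θ j * θ l) * ∑ i, φ j i l * Eb i := by
      intro l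
      rw [Finset.sum_comm]
      apply Finset.sum_congr rfl
      intro j _
      rw [Finset.mul_sum]
    rw [Finset.sum_congr rfl (fun l _ => e2 l), Finset.sum_comm, hr1]
  have hB : L (limitDrift ρ P φ θ) = (1 - ρ) * p1 + ρ * r1 - pd := by
    rw [hdec]
    have expand : ∀ i, limitDrift ρ P φ θ i * Eb i
        = (1 - ρ) * ((∑ j, P j i * θ j) * Eb i)
          + ρ * ((∑ l, θ l * ∑ j, φ j i l * θ j) * Eb i) - θ i * Eb i := by
      intro i
      rw [limitDrift]
      ring
    rw [Finset.sum_congr rfl (fun i _ => expand i), Finset.sum_sub_distrib,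
      Finset.sum_add_distrib, ← Finset.mul_sum, ← Finset.mul_sum, hp1', hr1', hpd]
  -- (C) Sθ identity
  have hCid : Sθ = r1 - pd := by
    rw [hSθ, hr1]
    have perjl : ∀ j l, (θ j * θ l) * Ff j l
        = (θ j * θ l) * (∑ a, φ j a l * Eb a) - θ l * (θ j * Eb j) := by
      intro j l
      rw [hFex j l]
      ring
    rw [Finset.sum_congr rfl (fun j _ => Finset.sum_congr rfl (fun l _ => perjl j l))]
    have perj : ∀ j, ∑ l, ((θ j * θ l) * (∑ a, φ j a l * Eb a) - θ l * (θ j * Eb j))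
        = (∑ l, (θ j * θ l) * (∑ a, φ j a l * Eb a)) - θ j * Eb j := by
      intro j
      rw [Finset.sum_sub_distrib, ← Finset.sum_mul, hθsum, one_mul]
    rw [Finset.sum_congr rfl (fun j _ => perj j), Finset.sum_sub_distrib, ← hpd]
  -- combine: Dr - pairing = ρ * (Sξ - Sθ)
  have hdiff : Dr - L (limitDrift ρ P φ θ) = ρ * (Sξ - Sθ) := by
    rw [hDrA, hB, hCid]
    ring
  -- bound |Sξ - Sθ|
  have hSbound : |Sξ - Sθ| ≤ (Fintype.card A : ℝ) ^ 2
      * ((4 * mixingGap E + 1 / (d - 1)) * (2 * C1)) := by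
    have hsub : Sξ - Sθ = ∑ j, ∑ l, (boundary E x j l - θ j * θ l) * Ff j l := by
      rw [hSξ, hSθ, ← Finset.sum_sub_distrib]
      apply Finset.sum_congr rfl
      intro j _
      rw [← Finset.sum_sub_distrib]
      apply Finset.sum_congr rfl
      intro l _
      ring
    rw [hsub]
    calc |∑ j, ∑ l, (boundary E x j l - θ j * θ l) * Ff j l|
        ≤ ∑ j, |∑ l, (boundary E x j l - θ j * θ l) * Ff j l| := Finset.abs_sum_le_sum_abs _ _
    _ ≤ ∑ j : A, ∑ l : A, |(boundary E x j l - θ j * θ l) * Ff j l| := by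
        apply Finset.sum_le_sum
        intro j _
        exact Finset.abs_sum_le_sum_abs _ _
    _ ≤ ∑ j : A, ∑ l : A, (4 * mixingGap E + 1 / (d - 1)) * (2 * C1) := by
        apply Finset.sum_le_sum
        intro j _
        apply Finset.sum_le_sum
        intro l _
        rw [abs_mul]
        apply mul_le_mul
        · exact boundary_prod_bound E hEloop hn2 x j l
        · exact hFfB j l
        · exact abs_nonneg _
        · have := mixingGap_nonneg E hn2
          have : (0:ℝ) < d - 1 := by linarith
          positivity
    _ = (Fintype.card A : ℝ) ^ 2 * ((4 * mixingGap E + 1 / (d - 1)) * (2 * C1)) := by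
        rw [Finset.sum_const, Finset.sum_const, nsmul_eq_mul, nsmul_eq_mul, Finset.card_univ]
        push_cast
        ring
  -- Taylor estimates
  have htaylor : ∀ (u : V) (a : A),
      |(Vf (confType (Function.update x u a)) - Vf θ) - (1/d) * (Eb a - Eb (x u))|
        ≤ C2 / d ^ 2 := by
    intro u a
    set b : A → ℝ := confType (Function.update x u a) with hb
    have hbball : b ∈ Metric.closedBall (0 : A → ℝ) 1 := confType_mem_ball _
    have hnorm : ‖b - θ‖ ≤ 1 / d := by
      apply pi_norm_le_iff_of_nonneg (by positivity) |>.mpr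
      intro i
      rw [Pi.sub_apply, Real.norm_eq_abs, hb, hθ, confType_update x u a i, abs_div,
        abs_of_pos hd0]
      have hnum : |(if a = i then (1:ℝ) else 0) - if x u = i then 1 else 0| ≤ 1 := by
        split_ifs <;> norm_num
      exact (div_le_div_iff_of_pos_right hd0).mpr hnum
    have hlin : L (b - θ) = (1/d) * (Eb a - Eb (x u)) := by
      rw [hdec (b - θ)]
      have expand : ∀ i, (b - θ) i * Eb i
          = (1/d) * ((if a = i then (1:ℝ) else 0) * Eb i)
            - (1/d) * ((if x u = i then (1:ℝ) else 0) * Eb i) := by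
        intro i
        rw [Pi.sub_apply, hb, hθ, confType_update x u a i]
        ring
      rw [Finset.sum_congr rfl (fun i _ => expand i), Finset.sum_sub_distrib,
        ← Finset.mul_sum, ← Finset.mul_sum]
      have ind1 : ∑ i, (if a = i then (1:ℝ) else 0) * Eb i = Eb a := by
        have conv1 : ∀ i, (if a = i then (1:ℝ) else 0) * Eb i = if a = i then Eb i else 0 := by
          intro i
          split_ifs <;> simp
        rw [Finset.sum_congr rfl (fun i _ => conv1 i), Finset.sum_ite_eq]
        simp
      have ind2 : ∑ i, (if x u = i then (1:ℝ) else 0) * Eb i = Eb (x u) := by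
        have conv2 : ∀ i, (if x u = i then (1:ℝ) else 0) * Eb i = if x u = i then Eb i else 0 := by
          intro i
          split_ifs <;> simp
        rw [Finset.sum_congr rfl (fun i _ => conv2 i), Finset.sum_ite_eq]
        simp
      rw [ind1, ind2]
      ring
    have htay := taylor_bound hdiffV hC20 hC2 hθball hbball
    rw [← hL] at htay
    rw [← hlin]
    have hb2 : ‖b - θ‖ ^ 2 ≤ (1/d) ^ 2 := by
      apply pow_le_pow_left₀ (norm_nonneg _) hnorm
    calc |Vf b - Vf θ - L (b - θ)| ≤ C2 * ‖b - θ‖ ^ 2 := htay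
    _ ≤ C2 * (1/d) ^ 2 := mul_le_mul_of_nonneg_left hb2 hC20
    _ = C2 / d ^ 2 := by field_simp
  -- convert the transition sum
  set s : Finset (V × A) := (Finset.univ ×ˢ Finset.univ).filter (fun p : V × A => p.2 ≠ x p.1)
    with hset
  have hconv : ∑ y : V → A, pinTrans E ρ P φ x y * (Vf (confType y) - Vf θ)
      = ∑ p ∈ s, wgt E ρ P φ x p.1 p.2 * (Vf (confType (Function.update x p.1 p.2)) - Vf θ) := by
    have step : ∑ y : V → A, pinTrans E ρ P φ x y * (Vf (confType y) - Vf θ)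
        = ∑ y : V → A, Toff E ρ P φ x y * (Vf (confType y) - Vf θ) := by
      apply Finset.sum_congr rfl
      intro y _
      rcases eq_or_ne x y with rfl | hxy
      · rw [hθ, sub_self, mul_zero, mul_zero]
      · rw [pinTrans, if_neg hxy]
    rw [step, sum_Toff_mul E ρ P φ x _ (by rw [hθ, sub_self])]
  -- drift over the restricted index set equals Dr
  have hDrS : ∑ p ∈ s, wgt E ρ P φ x p.1 p.2 * (Eb p.2 - Eb (x p.1)) = Dr := by
    rw [hDr, ← Finset.sum_product']
    apply Finset.sum_subset (Finset.filter_subset _ _)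
    intro p _ hp
    have hpx : p.2 = x p.1 := by
      by_contra hne
      exact hp (Finset.mem_filter.mpr
        ⟨Finset.mem_product.mpr ⟨Finset.mem_univ _, Finset.mem_univ _⟩, hne⟩)
    rw [hpx, sub_self, mul_zero]
  have hwgtsum : ∑ p ∈ s, wgt E ρ P φ x p.1 p.2 ≤ 1 :=
    sum_wgt_le_one E ρ P φ hρ0 hρ1 hP hP1 hφpos hφ1 (ne_of_gt hd0) (ne_of_gt hm0) x
  have hwgt0 : ∀ p ∈ s, 0 ≤ wgt E ρ P φ x p.1 p.2 :=
    fun p _ => wgt_nonneg E ρ P φ hρ0 hρ1 hP hφpos x p.1 p.2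
  -- final combination
  have hstep1 : |(∑ y : V → A, pinTrans E ρ P φ x y * (Vf (confType y) - Vf θ)) - (1/d) * Dr|
      ≤ C2 / d ^ 2 := by
    rw [hconv, ← hDrS, Finset.mul_sum, ← Finset.sum_sub_distrib]
    calc |∑ p ∈ s, (wgt E ρ P φ x p.1 p.2 * (Vf (confType (Function.update x p.1 p.2)) - Vf θ)
            - (1/d) * (wgt E ρ P φ x p.1 p.2 * (Eb p.2 - Eb (x p.1))))|
        ≤ ∑ p ∈ s, |wgt E ρ P φ x p.1 p.2 * (Vf (confType (Function.update x p.1 p.2)) - Vf θ)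
            - (1/d) * (wgt E ρ P φ x p.1 p.2 * (Eb p.2 - Eb (x p.1)))| :=
          Finset.abs_sum_le_sum_abs _ _
    _ ≤ ∑ p ∈ s, wgt E ρ P φ x p.1 p.2 * (C2 / d ^ 2) := by
        apply Finset.sum_le_sum
        intro p hp
        have : wgt E ρ P φ x p.1 p.2 * (Vf (confType (Function.update x p.1 p.2)) - Vf θ)
            - (1/d) * (wgt E ρ P φ x p.1 p.2 * (Eb p.2 - Eb (x p.1)))
            = wgt E ρ P φ x p.1 p.2 * ((Vf (confType (Function.update x p.1 p.2)) - Vf θ)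
              - (1/d) * (Eb p.2 - Eb (x p.1))) := by ring
        rw [this, abs_mul, abs_of_nonneg (hwgt0 p hp)]
        exact mul_le_mul_of_nonneg_left (htaylor p.1 p.2) (hwgt0 p hp)
    _ = (∑ p ∈ s, wgt E ρ P φ x p.1 p.2) * (C2 / d ^ 2) := (Finset.sum_mul _ _ _).symm
    _ ≤ 1 * (C2 / d ^ 2) := by
        apply mul_le_mul_of_nonneg_right hwgtsum
        positivity
    _ = C2 / d ^ 2 := one_mul _
  have hstep2 : |(1/d) * Dr - (1/d) * L (limitDrift ρ P φ θ)|
      ≤ (1/d) * ((Fintype.card A : ℝ) ^ 2 * ((4 * mixingGap E + 1 / (d - 1)) * (2 * C1))) := by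
    rw [← mul_sub, abs_mul, abs_of_pos (by positivity : (0:ℝ) < 1/d), hdiff, abs_mul,
      abs_of_nonneg hρ0]
    apply mul_le_mul_of_nonneg_left ?_ (by positivity)
    calc ρ * |Sξ - Sθ| ≤ 1 * |Sξ - Sθ| :=
          mul_le_mul_of_nonneg_right hρ1 (abs_nonneg _)
    _ = |Sξ - Sθ| := one_mul _
    _ ≤ _ := hSbound
  calc |(∑ y : V → A, pinTrans E ρ P φ x y * (Vf (confType y) - Vf θ))
        - (1/d) * L (limitDrift ρ P φ θ)|
      ≤ |(∑ y : V → A, pinTrans E ρ P φ x y * (Vf (confType y) - Vf θ)) - (1/d) * Dr|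
        + |(1/d) * Dr - (1/d) * L (limitDrift ρ P φ θ)| := abs_sub_le _ _ _
  _ ≤ C2 / d ^ 2 + (1/d) * ((Fintype.card A : ℝ) ^ 2
        * ((4 * mixingGap E + 1 / (d - 1)) * (2 * C1))) := add_le_add hstep1 hstep2
  _ = (1/d) * (2 * C1 * (Fintype.card A : ℝ) ^ 2 * (4 * mixingGap E + 1 / (d - 1)) + C2 / d) := by
      field_simp
      ring

end Pointwise

section Key
variable {V A : Type*} [Fintype V] [DecidableEq V] [Fintype A] [DecidableEq A]

lemma key_estimate (E : Finset (V × V)) (ρ : ℝ) (P : A → A → ℝ) (φ : A → A → A → ℝ)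
    (hmodel : IsPinModel E ρ P φ) (hn2 : (2:ℝ) ≤ (Fintype.card V : ℝ))
    (Vf : (A → ℝ) → ℝ) (hVf : ContDiff ℝ 2 Vf) (C1 C2 : ℝ) (hC10 : 0 ≤ C1) (hC20 : 0 ≤ C2)
    (hC1 : ∀ θ ∈ Metric.closedBall (0 : A → ℝ) 1, ‖fderiv ℝ Vf θ‖ ≤ C1)
    (hC2 : ∀ u ∈ Metric.closedBall (0 : A → ℝ) 1, ∀ v ∈ Metric.closedBall (0 : A → ℝ) 1,
      ‖fderiv ℝ Vf u - fderiv ℝ Vf v‖ ≤ C2 * ‖u - v‖)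
    (μ : (V → A) → ℝ) (hμ : IsPinStationary E ρ P φ μ) :
    ∑ x : V → A, μ x * (-(fderiv ℝ Vf (confType x) (limitDrift ρ P φ (confType x))))
      ≤ 2 * C1 * (Fintype.card A : ℝ) ^ 2
          * (4 * mixingGap E + 1 / ((Fintype.card V : ℝ) - 1))
        + C2 / (Fintype.card V : ℝ) := by
  classical
  set d : ℝ := (Fintype.card V : ℝ) with hd
  have hd0 : (0:ℝ) < d := by linarith
  set B : ℝ := 2 * C1 * (Fintype.card A : ℝ) ^ 2 * (4 * mixingGap E + 1 / (d - 1)) + C2 / d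
    with hB
  set G : (V → A) → ℝ :=
    fun x => ∑ y : V → A, pinTrans E ρ P φ x y * (Vf (confType y) - Vf (confType x)) with hG
  set H : (V → A) → ℝ :=
    fun x => fderiv ℝ Vf (confType x) (limitDrift ρ P φ (confType x)) with hH
  have hzero : ∑ x : V → A, μ x * G x = 0 :=
    stationary_zero E ρ P φ μ hμ (fun y => Vf (confType y))
  have hpoint : ∀ x : V → A, |G x - (1/d) * H x| ≤ (1/d) * B :=
    fun x => pointwise_estimate E ρ P φ hmodel hn2 Vf hVf C1 C2 hC10 hC20 hC1 hC2 x
  obtain ⟨hμ0, hμ1, -⟩ := hμ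
  have hdne : d ≠ 0 := ne_of_gt hd0
  calc ∑ x : V → A, μ x * (-(H x))
      = d * (∑ x : V → A, μ x * (G x - (1/d) * H x)) - d * (∑ x : V → A, μ x * G x) := by
        rw [Finset.mul_sum, Finset.mul_sum, ← Finset.sum_sub_distrib]
        apply Finset.sum_congr rfl
        intro x _
        field_simp
        ring
  _ = d * (∑ x : V → A, μ x * (G x - (1/d) * H x)) := by rw [hzero, mul_zero, sub_zero]
  _ ≤ d * ((1/d) * B) := by
        apply mul_le_mul_of_nonneg_left ?_ hd0.le
        calc ∑ x : V → A, μ x * (G x - (1/d) * H x)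
            ≤ ∑ x : V → A, μ x * ((1/d) * B) :=
              Finset.sum_le_sum fun x _ =>
                mul_le_mul_of_nonneg_left ((le_abs_self _).trans (hpoint x)) (hμ0 x)
        _ = (1/d) * B := by rw [← Finset.sum_mul, hμ1, one_mul]
  _ = B := by field_simp

end Key

set_option maxHeartbeats 1000000 in
/-- Theorem: concentration on asymptotically totally mixing networks.
If a PIN model with fixed parameters runs on an ATM sequence of graphs `G_n` and admits
a `C²` mean-field Lyapunov function `V`, then for every `δ > 0` the stationary
distributions satisfy `μ_n({x : ∇V(θ(x))·D̄(θ(x)) > −δ}) → 1` as `n → ∞`. -/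
theorem concentration_ATM {A : Type*} [Fintype A] [DecidableEq A] [Nonempty A]
    (ρ : ℝ) (P : A → A → ℝ) (φ : A → A → A → ℝ)
    (E : (n : ℕ) → Finset (Fin n × Fin n))
    (hmodel : ∀ n, 2 ≤ n → IsPinModel (E n) ρ P φ)
    (hATM : Tendsto (fun n => mixingGap (E n)) atTop (nhds 0))
    (μ : (n : ℕ) → (Fin n → A) → ℝ)
    (hμ : ∀ n, 2 ≤ n → IsPinStationary (E n) ρ P φ (μ n))
    (W : (A → ℝ) → ℝ) (hW : ContDiff ℝ 2 W)
    (hLyap : ∀ θ : A → ℝ, inSimplex θ → fderiv ℝ W θ (limitDrift ρ P φ θ) ≤ 0) :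
    ∀ δ > (0 : ℝ),
      Tendsto (fun n => massOf (μ n) (fun x : Fin n → A =>
          fderiv ℝ W (confType x) (limitDrift ρ P φ (confType x)) > -δ))
        atTop (nhds 1) := by
  classical
  intro δ hδ
  obtain ⟨C1, hC10, hC1⟩ := exists_C1 hW
  obtain ⟨C2, hC20, hC2⟩ := exists_C2 hW
  set B : ℕ → ℝ := fun n => 2 * C1 * (Fintype.card A : ℝ) ^ 2
      * (4 * mixingGap (E n) + 1 / ((n:ℝ) - 1)) + C2 / (n:ℝ) with hB
  have h1 : Tendsto (fun n : ℕ => 1 / ((n:ℝ) - 1)) atTop (nhds 0) := by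
    have ha : Tendsto (fun n : ℕ => (n:ℝ) - 1) atTop atTop := by
      apply tendsto_atTop_add_const_right
      exact tendsto_natCast_atTop_atTop
    simpa [one_div, Pi.inv_def] using ha.inv_tendsto_atTop
  have h2 : Tendsto (fun n : ℕ => C2 / (n:ℝ)) atTop (nhds 0) := by
    have hb : Tendsto (fun n : ℕ => ((n:ℝ))⁻¹) atTop (nhds 0) :=
      tendsto_natCast_atTop_atTop.inv_tendsto_atTop
    simpa [div_eq_mul_inv] using hb.const_mul C2
  have hBtend : Tendsto B atTop (nhds 0) := by
    have hsum : Tendsto (fun n => 4 * mixingGap (E n) + 1 / ((n:ℝ) - 1)) atTop (nhds 0) := by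
      simpa using (hATM.const_mul 4).add h1
    have hpart : Tendsto (fun n => 2 * C1 * (Fintype.card A : ℝ) ^ 2
        * (4 * mixingGap (E n) + 1 / ((n:ℝ) - 1))) atTop (nhds 0) := by
      simpa using hsum.const_mul (2 * C1 * (Fintype.card A : ℝ) ^ 2)
    rw [hB]
    simpa using hpart.add h2
  have hbounds : ∀ n : ℕ, 2 ≤ n →
      1 - B n / δ ≤ massOf (μ n) (fun x : Fin n → A =>
        fderiv ℝ W (confType x) (limitDrift ρ P φ (confType x)) > -δ)
      ∧ massOf (μ n) (fun x : Fin n → A =>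
        fderiv ℝ W (confType x) (limitDrift ρ P φ (confType x)) > -δ) ≤ 1 := by
    intro n hn
    have hμn := hμ n hn
    have hn2 : (2:ℝ) ≤ (Fintype.card (Fin n) : ℝ) := by
      rw [Fintype.card_fin]
      exact_mod_cast hn
    have hcardne : (Fintype.card (Fin n) : ℝ) ≠ 0 := by linarith
    have hkey := key_estimate (E n) ρ P φ (hmodel n hn) hn2 W hW C1 C2 hC10 hC20 hC1 hC2
      (μ n) hμn
    rw [Fintype.card_fin] at hkey
    have hkey' : ∑ x : Fin n → A,
        μ n x * (-(fderiv ℝ W (confType x) (limitDrift ρ P φ (confType x)))) ≤ B n := hkey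
    set p : (Fin n → A) → Prop := fun x =>
      fderiv ℝ W (confType x) (limitDrift ρ P φ (confType x)) > -δ with hp
    have hLy : ∀ x : Fin n → A,
        0 ≤ -(fderiv ℝ W (confType x) (limitDrift ρ P φ (confType x))) := by
      intro x
      have hsimp : inSimplex (confType x) := by
        constructor
        · intro i
          unfold confType
          exact div_nonneg (Nat.cast_nonneg _) (Nat.cast_nonneg _)
        · exact sum_confType hcardne x
      linarith [hLyap (confType x) hsimp]
    obtain ⟨hμ0, hμ1, -⟩ := hμn
    have hcompl : massOf (μ n) p + massOf (μ n) (fun x => ¬ p x) = 1 := by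
      rw [massOf, massOf, ← Finset.sum_add_distrib, ← hμ1]
      apply Finset.sum_congr rfl
      intro x _
      by_cases hx : p x <;> simp [hx]
    have hneg0 : 0 ≤ massOf (μ n) (fun x => ¬ p x) := by
      apply Finset.sum_nonneg
      intro x _
      by_cases hx : ¬ p x <;> simp [hx, hμ0 x]
    have hstep : massOf (μ n) (fun x => ¬ p x) * δ ≤ ∑ x : Fin n → A,
        μ n x * (-(fderiv ℝ W (confType x) (limitDrift ρ P φ (confType x)))) := by
      rw [massOf, Finset.sum_mul]
      apply Finset.sum_le_sum
      intro x _
      by_cases hx : ¬ p x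
      · rw [if_pos hx]
        have hle : δ ≤ -(fderiv ℝ W (confType x) (limitDrift ρ P φ (confType x))) := by
          rw [hp] at hx
          simp only [not_lt, gt_iff_lt] at hx
          linarith
        exact mul_le_mul_of_nonneg_left hle (hμ0 x)
      · rw [if_neg hx, zero_mul]
        exact mul_nonneg (hμ0 x) (hLy x)
    have hmarkov : massOf (μ n) (fun x => ¬ p x) * δ ≤ B n := hstep.trans hkey'
    have hnegle : massOf (μ n) (fun x => ¬ p x) ≤ B n / δ := by
      rw [le_div_iff₀ hδ]
      exact hmarkov
    constructor
    · linarith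
    · linarith
  apply tendsto_of_tendsto_of_tendsto_of_le_of_le' (g := fun n => 1 - B n / δ)
    (h := fun _ => (1:ℝ))
  · simpa using tendsto_const_nhds.sub (hBtend.div_const δ)
  · exact tendsto_const_nhds
  · filter_upwards [eventually_ge_atTop 2] with n hn
    exact (hbounds n hn).1
  · filter_upwards [eventually_ge_atTop 2] with n hn
    exact (hbounds n hn).2

end
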